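/- arXiv:1912.13323 — 3 statements merged into one kernel-verified Lean document; each statement's English description precedes it below -/
import Mathlib

section
/- For every integer Δ ≥ 2, the uniform full Δ-ary tree of height 2 satisfies χ_td(T_{Δ,2}) = ⌊(3Δ + 3)/2⌋. -/
open SimpleGraph

/-- A `k`-total difference labeling of `G`: a proper vertex labeling `c` with labels in
`{1,…,k}` such that the induced edge label `|c u - c v|` of each edge differs from the
labels of its two incident vertices, and distinct edges sharing a vertex receive
distinct induced labels. -/
def IsTotalDiffLabeling {V : Type*} (G : SimpleGraph V) (k : ℕ) (c : V → ℕ) : Prop :=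
  (∀ v, 1 ≤ c v ∧ c v ≤ k) ∧
  (∀ u v, G.Adj u v → c u ≠ c v) ∧
  (∀ u v, G.Adj u v → Nat.dist (c u) (c v) ≠ c u ∧ Nat.dist (c u) (c v) ≠ c v) ∧
  (∀ u v w, G.Adj u v → G.Adj v w → u ≠ w →
    Nat.dist (c u) (c v) ≠ Nat.dist (c v) (c w))

/-- The total difference chromatic number of `G`: the least `k` for which `G` admits a
`k`-total difference labeling. -/
noncomputable def tdChromatic {V : Type*} (G : SimpleGraph V) : ℕ :=
  sInf {k | ∃ c : V → ℕ, IsTotalDiffLabeling G k c}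

/-- `G` is a uniform full `Δ`-ary tree of height `h` rooted at `r`: a tree in which
every vertex is at distance at most `h` from `r`, every vertex at distance less than
`h` from `r` has degree `Δ`, and every vertex at distance exactly `h` from `r` is a
leaf. -/
def IsUniformFullTree {V : Type*} [Fintype V] (G : SimpleGraph V) [DecidableRel G.Adj]
    (Δ h : ℕ) (r : V) : Prop :=
  G.IsTree ∧ (∀ v : V, G.dist r v ≤ h) ∧
    (∀ v : V, G.dist r v < h → G.degree v = Δ) ∧
    (∀ v : V, G.dist r v = h → G.degree v = 1)

namespace TDAux


/-- the set of available edge differences at a vertex labeled `x`, labels in `[1,k]` -/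
def Aset (k x : ℕ) : Finset ℕ :=
  (Finset.Icc 1 k).filter fun d => d ≠ x ∧ (x + d ≤ k ∨ (d < x ∧ 2*d ≠ x))

lemma deg_le_Aset {V : Type*} [Fintype V] (G : SimpleGraph V) [DecidableRel G.Adj]
    {k : ℕ} {c : V → ℕ} (h : IsTotalDiffLabeling G k c) (v : V) :
    G.degree v ≤ (Aset k (c v)).card := by
  obtain ⟨h1, h2, h3, h4⟩ := h
  rw [← SimpleGraph.card_neighborFinset_eq_degree]
  apply Finset.card_le_card_of_injOn (fun w => Nat.dist (c v) (c w))
  · intro w hw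
    rw [Finset.mem_coe, SimpleGraph.mem_neighborFinset] at hw
    have hvw := h2 v w hw
    have h3vw := h3 v w hw
    have hb1 := (h1 w).1
    have hb2 := (h1 w).2
    have hv1 := (h1 v).1
    have hv2 := (h1 v).2
    have hd : Nat.dist (c v) (c w) = c v - c w + (c w - c v) := rfl
    simp only [Finset.mem_coe, Aset, Finset.mem_filter, Finset.mem_Icc]
    omega
  · intro w hw w' hw' heq
    simp only [Finset.mem_coe, SimpleGraph.mem_neighborFinset] at hw hw'
    by_contra hne
    exact h4 w v w' hw.symm hw' hne (by rw [Nat.dist_comm]; exact heq)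

lemma mem_S {Δ k x : ℕ} (hΔ : 2 ≤ Δ) (hk : k = (3*Δ+3)/2 - 1)
    (hx1 : 1 ≤ x) (hxk : x ≤ k) (hA : Δ ≤ (Aset k x).card) :
    x ∈ Finset.Icc 1 (k - Δ - 1) ∪ Finset.Icc (Δ + 1 + Δ % 2) k := by
  by_contra hx
  simp only [Finset.mem_union, Finset.mem_Icc, not_or, not_and] at hx
  rcases le_or_gt x Δ with hxle | hxgt
  · have hsub : Aset k x ⊆ (Finset.Icc 1 Δ).erase x := by
      intro d hd
      simp only [Aset, Finset.mem_filter, Finset.mem_Icc] at hd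
      simp only [Finset.mem_erase, Finset.mem_Icc]
      omega
    have hle := Finset.card_le_card hsub
    rw [Finset.card_erase_of_mem (by simp only [Finset.mem_Icc]; omega),
      Nat.card_Icc] at hle
    omega
  · have hsub : Aset k x ⊆ (Finset.Icc 1 Δ).erase ((Δ+1)/2) := by
      intro d hd
      simp only [Aset, Finset.mem_filter, Finset.mem_Icc] at hd
      simp only [Finset.mem_erase, Finset.mem_Icc]
      omega
    have hle := Finset.card_le_card hsub
    rw [Finset.card_erase_of_mem (by simp only [Finset.mem_Icc]; omega),
      Nat.card_Icc] at hle
    omega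

lemma no_labeling {V : Type*} [Fintype V] (G : SimpleGraph V) [DecidableRel G.Adj]
    {Δ : ℕ} (hΔ : 2 ≤ Δ) (r : V) (hG : IsUniformFullTree G Δ 2 r) (c : V → ℕ)
    (h : IsTotalDiffLabeling G ((3*Δ+3)/2 - 1) c) : False := by
  classical
  obtain ⟨htree, hd2, hdeg, hleaf⟩ := hG
  set k := (3*Δ+3)/2 - 1 with hk
  have hdegr : G.degree r = Δ := hdeg r (by rw [SimpleGraph.dist_self]; omega)
  have hdegC : ∀ u ∈ G.neighborFinset r, G.degree u = Δ := by
    intro u hu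
    rw [SimpleGraph.mem_neighborFinset] at hu
    exact hdeg u (by rw [SimpleGraph.dist_eq_one_iff_adj.mpr hu]; omega)
  set T := insert r (G.neighborFinset r) with hT
  have hrC : r ∉ G.neighborFinset r := by simp
  have hTcard : T.card = Δ + 1 := by
    rw [hT, Finset.card_insert_of_notMem hrC,
      SimpleGraph.card_neighborFinset_eq_degree, hdegr]
  have hmaps : ∀ v ∈ T, c v ∈ Finset.Icc 1 (k-Δ-1) ∪ Finset.Icc (Δ+1+Δ%2) k := by
    intro v hv
    have hdv : G.degree v = Δ := by
      rcases Finset.mem_insert.mp hv with rfl | hv'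
      · exact hdegr
      · exact hdegC v hv'
    refine mem_S hΔ hk (h.1 v).1 (h.1 v).2 ?_
    have := deg_le_Aset G h v
    omega
  have hinj : Set.InjOn c T := by
    intro u hu v hv heq
    by_contra hne
    rcases Finset.mem_insert.mp hu with rfl | hu' <;>
      rcases Finset.mem_insert.mp hv with rfl | hv'
    · exact hne rfl
    · rw [SimpleGraph.mem_neighborFinset] at hv'
      exact h.2.1 u v hv' heq
    · rw [SimpleGraph.mem_neighborFinset] at hu'
      exact h.2.1 v u hu' heq.symm
    · rw [SimpleGraph.mem_neighborFinset] at hu' hv'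
      exact h.2.2.2 u r v hu'.symm hv' hne (by rw [heq, Nat.dist_comm])
  have hcard := Finset.card_le_card_of_injOn c hmaps hinj
  have hcardS : (Finset.Icc 1 (k-Δ-1) ∪ Finset.Icc (Δ+1+Δ%2) k).card ≤ Δ - 1 := by
    calc (Finset.Icc 1 (k-Δ-1) ∪ Finset.Icc (Δ+1+Δ%2) k).card
        ≤ (Finset.Icc 1 (k-Δ-1)).card + (Finset.Icc (Δ+1+Δ%2) k).card :=
          Finset.card_union_le _ _
      _ ≤ Δ - 1 := by rw [Nat.card_Icc, Nat.card_Icc]; omega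
  omega



def skip1 (s j : ℕ) : ℕ := if j + 1 < s then j + 1 else j + 2

def skip2 (s t j : ℕ) : ℕ :=
  if j + 1 < s then j + 1 else if j + 2 < t then j + 2 else j + 3

def eDiff (Δ k β j : ℕ) : ℕ :=
  if β ≤ Δ then skip1 β j
  else if β % 2 = 0 ∧ β / 2 ≠ k - β then
    (if k - β < β / 2 then skip2 (k - β) (β / 2) j else skip2 (β / 2) (k - β) j)
  else skip1 (k - β) j

def leafLabel (Δ k β j : ℕ) : ℕ :=
  if β ≤ Δ then β + eDiff Δ k β j else β - eDiff Δ k β j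

def childLabel (Δ k i : ℕ) : ℕ :=
  if i + 1 ≤ k - 1 - Δ then Δ + 1 + i else i - (k - 1 - Δ) + 1

lemma childLabel_spec {Δ k i : ℕ} (hΔ : 2 ≤ Δ) (hk : k = (3*Δ+3)/2) (hi : i < Δ) :
    (1 ≤ childLabel Δ k i ∧ childLabel Δ k i + k ≤ 2*Δ+1) ∨
      (Δ+1 ≤ childLabel Δ k i ∧ childLabel Δ k i + 1 ≤ k) := by
  unfold childLabel; split_ifs <;> omega

lemma childLabel_inj {Δ k i1 i2 : ℕ} (hΔ : 2 ≤ Δ) (hk : k = (3*Δ+3)/2)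
    (h1 : i1 < Δ) (h2 : i2 < Δ) (h : i1 ≠ i2) :
    childLabel Δ k i1 ≠ childLabel Δ k i2 := by
  unfold childLabel; split_ifs <;> omega

lemma eDiff_spec {Δ k β j : ℕ} (hΔ : 2 ≤ Δ) (hk : k = (3*Δ+3)/2)
    (hβ : (1 ≤ β ∧ β + k ≤ 2*Δ+1) ∨ (Δ+1 ≤ β ∧ β + 1 ≤ k)) (hj : j + 2 ≤ Δ) :
    (1 ≤ eDiff Δ k β j ∧ eDiff Δ k β j ≤ Δ + 1) ∧
    eDiff Δ k β j ≠ β ∧ eDiff Δ k β j ≠ k - β ∧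
    (Δ + 1 ≤ β → 2 * eDiff Δ k β j ≠ β) ∧
    (Δ + 1 ≤ β → eDiff Δ k β j + 1 ≤ β) ∧ (β ≤ Δ → eDiff Δ k β j ≤ Δ) := by
  unfold eDiff skip1 skip2; split_ifs <;> omega

lemma eDiff_mono {Δ k β : ℕ} {j1 j2 : ℕ} (h : j1 < j2) :
    eDiff Δ k β j1 < eDiff Δ k β j2 := by
  unfold eDiff skip1 skip2; split_ifs <;> omega

lemma leaf_spec {Δ k β j : ℕ} (hΔ : 2 ≤ Δ) (hk : k = (3*Δ+3)/2)
    (hβ : (1 ≤ β ∧ β + k ≤ 2*Δ+1) ∨ (Δ+1 ≤ β ∧ β + 1 ≤ k)) (hj : j + 2 ≤ Δ) :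
    1 ≤ leafLabel Δ k β j ∧ leafLabel Δ k β j ≤ k ∧ leafLabel Δ k β j ≠ β ∧
    Nat.dist β (leafLabel Δ k β j) = eDiff Δ k β j ∧
    eDiff Δ k β j ≠ leafLabel Δ k β j := by
  have h := eDiff_spec hΔ hk hβ hj
  have hd : ∀ a b : ℕ, Nat.dist a b = a - b + (b - a) := fun _ _ => rfl
  unfold leafLabel
  split_ifs with h1 <;> rw [hd] <;> omega

lemma exists_labeling {V : Type*} [Fintype V] (G : SimpleGraph V) [DecidableRel G.Adj]
    {Δ : ℕ} (hΔ : 2 ≤ Δ) (r : V) (hG : IsUniformFullTree G Δ 2 r) :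
    ∃ c : V → ℕ, IsTotalDiffLabeling G ((3*Δ+3)/2) c := by
  classical
  obtain ⟨htree, hd2, hdeg, hleaf⟩ := hG
  set k := (3*Δ+3)/2 with hk
  have hconn := htree.isConnected
  have hdegr : G.degree r = Δ := hdeg r (by rw [SimpleGraph.dist_self]; omega)
  have hdist2 : ∀ v : V, v ≠ r → ¬G.Adj r v → G.dist r v = 2 := by
    intro v h1 h2
    have h3 := hd2 v
    have h0 : G.dist r v ≠ 0 := by
      rw [SimpleGraph.dist_ne_zero_iff_ne_and_reachable]
      exact ⟨fun hh => h1 hh.symm, hconn.preconnected r v⟩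
    have h1' : G.dist r v ≠ 1 := fun hh => h2 (SimpleGraph.dist_eq_one_iff_adj.mp hh)
    omega
  have hnoCC : ∀ u v : V, G.Adj r u → G.Adj r v → ¬ G.Adj u v := by
    intro u v hu hv huv
    have h1 : (SimpleGraph.Walk.cons hv .nil : G.Walk r v).IsPath := by
      simp [SimpleGraph.Walk.isPath_def, hv.ne]
    have h2 : (SimpleGraph.Walk.cons hu (SimpleGraph.Walk.cons huv .nil) : G.Walk r v).IsPath := by
      simp [SimpleGraph.Walk.isPath_def, hu.ne, hv.ne, huv.ne]
    obtain ⟨q, _, hq⟩ := htree.existsUnique_path r v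
    have e1 := hq _ h1
    have e2 := hq _ h2
    rw [← e2] at e1
    have := congrArg SimpleGraph.Walk.length e1
    simp [SimpleGraph.Walk.length_cons] at this
  have hpar0 : ∀ v : V, ∃ p : V,
      (v ≠ r ∧ ¬G.Adj r v) → (G.Adj r p ∧ G.neighborFinset v = {p}) := by
    intro v
    by_cases hv : v ≠ r ∧ ¬G.Adj r v
    · obtain ⟨h1, h2⟩ := hv
      have hdv : (G.neighborFinset v).card = 1 := by
        rw [SimpleGraph.card_neighborFinset_eq_degree]
        exact hleaf v (hdist2 v h1 h2)
      obtain ⟨p, hp⟩ := Finset.card_eq_one.mp hdv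
      refine ⟨p, fun _ => ⟨?_, hp⟩⟩
      have hd0 : G.dist r v ≠ 0 := by rw [hdist2 v h1 h2]; omega
      obtain ⟨w, hw⟩ := SimpleGraph.exists_walk_of_dist_ne_zero hd0
      rw [hdist2 v h1 h2] at hw
      have ha1 : G.Adj (w.getVert 0) (w.getVert 1) := w.adj_getVert_succ (by omega)
      have ha2 : G.Adj (w.getVert 1) (w.getVert 2) := w.adj_getVert_succ (by omega)
      rw [SimpleGraph.Walk.getVert_zero] at ha1
      have hv2 : w.getVert 2 = v := by
        have := SimpleGraph.Walk.getVert_length w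
        rwa [hw] at this
      rw [hv2] at ha2
      have hmem : w.getVert 1 ∈ G.neighborFinset v := by
        rw [SimpleGraph.mem_neighborFinset]; exact ha2.symm
      rw [hp, Finset.mem_singleton] at hmem
      rwa [← hmem]
    · exact ⟨r, fun h => absurd h hv⟩
  choose par hpar using hpar0
  set C := G.neighborFinset r with hC
  have hCadj : ∀ x : V, x ∈ C ↔ G.Adj r x := by
    intro x; rw [hC, SimpleGraph.mem_neighborFinset]
  have hCcard : C.card = Δ := by
    rw [hC, SimpleGraph.card_neighborFinset_eq_degree, hdegr]
  set idx : V → ℕ := fun v => if hv : v ∈ C then ((C.equivFin ⟨v, hv⟩) : ℕ) else 0 with hidx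
  have hidxlt : ∀ v ∈ C, idx v < Δ := by
    intro v hv
    simp only [hidx, dif_pos hv]
    exact lt_of_lt_of_le (C.equivFin ⟨v, hv⟩).isLt hCcard.le
  have hidxinj : ∀ u ∈ C, ∀ v ∈ C, u ≠ v → idx u ≠ idx v := by
    intro u hu v hv hne
    simp only [hidx, dif_pos hu, dif_pos hv]
    intro hEq
    have := C.equivFin.injective (Fin.ext hEq)
    exact hne (by simpa using congrArg Subtype.val this)
  have hLcard : ∀ u ∈ C, ((G.neighborFinset u).erase r).card = Δ - 1 := by
    intro u hu
    rw [hCadj] at hu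
    rw [Finset.card_erase_of_mem (by rw [SimpleGraph.mem_neighborFinset]; exact hu.symm),
      SimpleGraph.card_neighborFinset_eq_degree,
      hdeg u (by rw [SimpleGraph.dist_eq_one_iff_adj.mpr hu]; omega)]
  set jdx : V → ℕ := fun v =>
    if hv : v ∈ (G.neighborFinset (par v)).erase r
    then (((G.neighborFinset (par v)).erase r).equivFin ⟨v, hv⟩ : ℕ) else 0 with hjdx
  have hleaffacts : ∀ v, v ≠ r → v ∉ C →
      par v ∈ C ∧ v ∈ (G.neighborFinset (par v)).erase r ∧ jdx v + 2 ≤ Δ := by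
    intro v h1 h2
    have hsp := hpar v ⟨h1, fun h => h2 ((hCadj v).mpr h)⟩
    have hpC : par v ∈ C := (hCadj _).mpr hsp.1
    have hadj : G.Adj v (par v) := by
      rw [← SimpleGraph.mem_neighborFinset, hsp.2]; exact Finset.mem_singleton_self _
    have hmem : v ∈ (G.neighborFinset (par v)).erase r :=
      Finset.mem_erase.mpr ⟨h1, by rw [SimpleGraph.mem_neighborFinset]; exact hadj.symm⟩
    refine ⟨hpC, hmem, ?_⟩
    have hle : jdx v < Δ - 1 := by
      simp only [hjdx, dif_pos hmem]
      exact lt_of_lt_of_le (((G.neighborFinset (par v)).erase r).equivFin ⟨v, hmem⟩).isLt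
        (hLcard _ hpC).le
    omega
  set c : V → ℕ := fun v =>
    if v = r then k else if v ∈ C then childLabel Δ k (idx v)
    else leafLabel Δ k (childLabel Δ k (idx (par v))) (jdx v) with hcdef
  have hrC : r ∉ C := by simp [hC]
  have hcr : c r = k := by simp [hcdef]
  have hcC : ∀ v ∈ C, c v = childLabel Δ k (idx v) := by
    intro v hv
    have hvr : v ≠ r := fun h => hrC (h ▸ hv)
    simp [hcdef, hvr, hv]
  have hcL : ∀ v, v ≠ r → v ∉ C →
      c v = leafLabel Δ k (childLabel Δ k (idx (par v))) (jdx v) := by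
    intro v h1 h2; simp [hcdef, h1, h2]
  have hadjcase : ∀ u v : V, G.Adj u v → (u = r ∧ v ∈ C) ∨ (v = r ∧ u ∈ C) ∨
      (u ∈ C ∧ v ∉ C ∧ v ≠ r ∧ par v = u) ∨ (v ∈ C ∧ u ∉ C ∧ u ≠ r ∧ par u = v) := by
    intro u v huv
    by_cases hur : u = r
    · subst hur; exact Or.inl ⟨rfl, (hCadj v).mpr huv⟩
    by_cases hvr : v = r
    · subst hvr; exact Or.inr (Or.inl ⟨rfl, (hCadj u).mpr huv.symm⟩)
    by_cases huC : u ∈ C <;> by_cases hvC : v ∈ C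
    · exact absurd huv (hnoCC u v ((hCadj u).mp huC) ((hCadj v).mp hvC))
    · refine Or.inr (Or.inr (Or.inl ⟨huC, hvC, hvr, ?_⟩))
      have hsp := hpar v ⟨hvr, fun h => hvC ((hCadj v).mpr h)⟩
      have hm : u ∈ G.neighborFinset v := by
        rw [SimpleGraph.mem_neighborFinset]; exact huv.symm
      rw [hsp.2, Finset.mem_singleton] at hm
      exact hm.symm
    · refine Or.inr (Or.inr (Or.inr ⟨hvC, huC, hur, ?_⟩))
      have hsp := hpar u ⟨hur, fun h => huC ((hCadj u).mpr h)⟩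
      have hm : v ∈ G.neighborFinset u := by
        rw [SimpleGraph.mem_neighborFinset]; exact huv
      rw [hsp.2, Finset.mem_singleton] at hm
      exact hm.symm
    · exfalso
      have hsp := hpar v ⟨hvr, fun h => hvC ((hCadj v).mpr h)⟩
      have hm : u ∈ G.neighborFinset v := by
        rw [SimpleGraph.mem_neighborFinset]; exact huv.symm
      rw [hsp.2, Finset.mem_singleton] at hm
      exact huC (hm ▸ (hCadj _).mpr hsp.1)
  -- bounds
  have hbounds : ∀ v : V, 1 ≤ c v ∧ c v ≤ k := by
    intro v
    by_cases h1 : v = r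
    · subst h1; rw [hcr]; omega
    by_cases h2 : v ∈ C
    · rw [hcC v h2]
      have := childLabel_spec hΔ hk (hidxlt v h2)
      omega
    · rw [hcL v h1 h2]
      obtain ⟨hpC, hmem, hj⟩ := hleaffacts v h1 h2
      have hβ := childLabel_spec hΔ hk (hidxlt _ hpC)
      have := leaf_spec hΔ hk hβ hj
      omega
  -- edge facts
  have hedge : ∀ u v : V, G.Adj u v → c u ≠ c v ∧
      Nat.dist (c u) (c v) ≠ c u ∧ Nat.dist (c u) (c v) ≠ c v := by
    intro u v huv
    have hdd : ∀ a b : ℕ, Nat.dist a b = a - b + (b - a) := fun _ _ => rfl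
    rcases hadjcase u v huv with ⟨rfl, hvC⟩ | ⟨rfl, huC⟩ | ⟨huC, hvC, hvr, hp⟩ |
      ⟨hvC, huC, hur, hp⟩
    · rw [hcr, hcC v hvC, hdd]
      have := childLabel_spec hΔ hk (hidxlt v hvC)
      omega
    · rw [hcr, hcC u huC, hdd]
      have := childLabel_spec hΔ hk (hidxlt u huC)
      omega
    · rw [hcC u huC, hcL v hvr hvC, hp]
      obtain ⟨hpC, hmem, hj⟩ := hleaffacts v hvr hvC
      have hβ := childLabel_spec hΔ hk (hidxlt u huC)
      have hsp := leaf_spec hΔ hk hβ hj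
      have he := eDiff_spec hΔ hk hβ hj
      refine ⟨(hsp.2.2.1).symm, ?_, ?_⟩
      · rw [hsp.2.2.2.1]; exact he.2.1
      · rw [hsp.2.2.2.1]; exact hsp.2.2.2.2
    · rw [hcC v hvC, hcL u hur huC, hp, Nat.dist_comm]
      obtain ⟨hpC, hmem, hj⟩ := hleaffacts u hur huC
      have hβ := childLabel_spec hΔ hk (hidxlt v hvC)
      have hsp := leaf_spec hΔ hk hβ hj
      have he := eDiff_spec hΔ hk hβ hj
      refine ⟨hsp.2.2.1, ?_, ?_⟩
      · rw [hsp.2.2.2.1]; exact hsp.2.2.2.2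
      · rw [hsp.2.2.2.1]; exact he.2.1
  -- star condition
  have hstar : ∀ u v w : V, G.Adj u v → G.Adj v w → u ≠ w →
      Nat.dist (c u) (c v) ≠ Nat.dist (c v) (c w) := by
    intro u v w huv hvw hne
    rw [Nat.dist_comm (c u) (c v)]
    have hdd : ∀ a b : ℕ, Nat.dist a b = a - b + (b - a) := fun _ _ => rfl
    by_cases hvr : v = r
    · subst hvr
      have huC : u ∈ C := (hCadj u).mpr huv.symm
      have hwC : w ∈ C := (hCadj w).mpr hvw
      rw [hcr, hcC u huC, hcC w hwC, hdd, hdd]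
      have h1 := childLabel_spec hΔ hk (hidxlt u huC)
      have h2 := childLabel_spec hΔ hk (hidxlt w hwC)
      have hinj := childLabel_inj hΔ hk (hidxlt u huC) (hidxlt w hwC)
        (hidxinj u huC w hwC hne)
      omega
    by_cases hvC : v ∈ C
    · -- v is a child; u and w are r or leaves of v
      have hkey : ∀ x : V, G.Adj v x → x ≠ r →
          x ∉ C ∧ par x = v ∧
          Nat.dist (c v) (c x) =
            eDiff Δ k (childLabel Δ k (idx v)) (jdx x) ∧ jdx x + 2 ≤ Δ ∧
          x ∈ (G.neighborFinset v).erase r := by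
        intro x hvx hxr
        have hxC : x ∉ C := fun hxC => hnoCC v x ((hCadj v).mp hvC) ((hCadj x).mp hxC) hvx
        have hp : par x = v := by
          rcases hadjcase v x hvx with ⟨hvr', _⟩ | ⟨hxr', _⟩ | ⟨_, _, _, hp⟩ |
            ⟨_, hvC', _, _⟩
          · exact absurd hvr' hvr
          · exact absurd hxr' hxr
          · exact hp
          · exact absurd hvC hvC'
        obtain ⟨hpC, hmem, hj⟩ := hleaffacts x hxr hxC
        rw [hp] at hmem
        have hβ := childLabel_spec hΔ hk (hidxlt v hvC)
        have hsp := leaf_spec hΔ hk hβ hj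
        refine ⟨hxC, hp, ?_, hj, hmem⟩
        rw [hcC v hvC, hcL x hxr hxC, hp, hsp.2.2.2.1]
      by_cases hur : u = r
      · subst hur
        have hw := hkey w hvw (fun h => hne h.symm)
        rw [hw.2.2.1, Nat.dist_comm, hcr, hcC v hvC]
        have hβ := childLabel_spec hΔ hk (hidxlt v hvC)
        have he := eDiff_spec hΔ hk hβ hw.2.2.2.1
        rw [hdd]
        omega
      by_cases hwr : w = r
      · subst hwr
        have hu := hkey u huv.symm hur
        rw [hu.2.2.1, hcr, hcC v hvC]
        have hβ := childLabel_spec hΔ hk (hidxlt v hvC)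
        have he := eDiff_spec hΔ hk hβ hu.2.2.2.1
        rw [hdd]
        omega
      · -- both leaves of v
        obtain ⟨huC2, hpu, hdu2, hju2, hmu⟩ := hkey u huv.symm hur
        obtain ⟨hwC2, hpw, hdw2, hjw2, hmw⟩ := hkey w hvw hwr
        rw [hdu2, hdw2]
        subst hpu
        have hju : jdx u = (((G.neighborFinset (par u)).erase r).equivFin ⟨u, hmu⟩ : ℕ) := by
          simp only [hjdx]
          rw [dif_pos hmu]
        have hjw : jdx w = (((G.neighborFinset (par u)).erase r).equivFin ⟨w, hmw⟩ : ℕ) := by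
          simp only [hjdx]
          rw [hpw, dif_pos hmw]
        have hjne : jdx u ≠ jdx w := by
          rw [hju, hjw]
          intro hEq
          have := ((G.neighborFinset (par u)).erase r).equivFin.injective (Fin.ext hEq)
          exact hne (by simpa using congrArg Subtype.val this)
        rcases lt_or_gt_of_ne hjne with hlt | hlt
        · exact (eDiff_mono hlt).ne
        · exact (eDiff_mono hlt).ne'
    · -- v is a leaf: impossible since u ≠ w
      exfalso
      have hsp := hpar v ⟨hvr, fun h => hvC ((hCadj v).mpr h)⟩
      have hu' : u ∈ G.neighborFinset v := by
        rw [SimpleGraph.mem_neighborFinset]; exact huv.symm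
      have hw' : w ∈ G.neighborFinset v := by
        rw [SimpleGraph.mem_neighborFinset]; exact hvw
      rw [hsp.2, Finset.mem_singleton] at hu' hw'
      exact hne (hu'.trans hw'.symm)
  exact ⟨c, hbounds, fun u v h => (hedge u v h).1,
    fun u v h => ⟨(hedge u v h).2.1, (hedge u v h).2.2⟩, hstar⟩

end TDAux

/-- For `Δ ≥ 2`, the uniform full `Δ`-ary tree of height `2` satisfies
`χ_td(T_{Δ,2}) = ⌊(3Δ + 3) / 2⌋`. -/
theorem tdChromatic_uniformFullTree_height_two {V : Type*} [Fintype V]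
    (G : SimpleGraph V) [DecidableRel G.Adj] (Δ : ℕ) (hΔ : 2 ≤ Δ) (r : V)
    (hG : IsUniformFullTree G Δ 2 r) :
    tdChromatic G = (3 * Δ + 3) / 2 := by
  have hmono : ∀ k1 k2 : ℕ, k1 ≤ k2 → (∃ c : V → ℕ, IsTotalDiffLabeling G k1 c) →
      ∃ c : V → ℕ, IsTotalDiffLabeling G k2 c := by
    rintro k1 k2 hle ⟨c, h1, h2, h3, h4⟩
    exact ⟨c, fun v => ⟨(h1 v).1, le_trans (h1 v).2 hle⟩, h2, h3, h4⟩
  have hmem : (3 * Δ + 3) / 2 ∈ {k | ∃ c : V → ℕ, IsTotalDiffLabeling G k c} :=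
    TDAux.exists_labeling G hΔ r hG
  refine le_antisymm (Nat.sInf_le hmem) (le_csInf ⟨_, hmem⟩ ?_)
  intro m hm
  by_contra hlt
  push_neg at hlt
  obtain ⟨c, hc⟩ := hmono m ((3 * Δ + 3) / 2 - 1) (by omega) hm
  exact TDAux.no_labeling G hΔ r hG c hc
end

section
/- For every integer Δ ≥ 2 and every integer h ≥ 2, the uniform full Δ-ary tree of height h satisfies ⌊(3Δ + 3)/2⌋ ≤ χ_td(T_{Δ,h}) ≤ 2Δ + 1. -/
open SimpleGraph

namespace TDAux
open Finset

/-- set of usable edge-difference classes at a vertex labeled `a` whose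
parent edge has difference `d` (use `d = 0` for the root). -/
def classSet (k a d : ℕ) : Finset ℕ :=
  (Finset.Icc 1 (max (a-1) (k-a))).filter (fun t => t ≠ a ∧ t ≠ d ∧ ¬(2*t = a ∧ k < a + t))

/-- representative label of class `t` relative to `a`. -/
def rep (k a t : ℕ) : ℕ := if a + t ≤ k then a + t else a - t

lemma ndist (x y : ℕ) : Nat.dist x y = x - y + (y - x) := rfl

lemma mem_classSet {k a d t : ℕ} :
    t ∈ classSet k a d ↔ (1 ≤ t ∧ t ≤ max (a-1) (k-a)) ∧
      t ≠ a ∧ t ≠ d ∧ ¬(2*t = a ∧ k < a + t) := by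
  simp [classSet, Finset.mem_filter, Finset.mem_Icc]

lemma rep_spec {k a d t : ℕ} (ha1 : 1 ≤ a) (hak : a ≤ k) (ht : t ∈ classSet k a d) :
    (1 ≤ rep k a t ∧ rep k a t ≤ k) ∧ Nat.dist a (rep k a t) = t ∧
      rep k a t ≠ a ∧ rep k a t ≠ t := by
  rw [mem_classSet] at ht
  obtain ⟨⟨ht1, ht2⟩, hta, htd, htb⟩ := ht
  rw [rep]
  rcases le_or_gt (a + t) k with hle | hlt
  · rw [if_pos hle]
    refine ⟨⟨by omega, hle⟩, by rw [ndist]; omega, by omega, by omega⟩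
  · rw [if_neg (by omega)]
    have hta1 : t ≤ a - 1 := by
      rcases max_cases (a-1) (k-a) with ⟨h1, h2⟩ | ⟨h1, h2⟩ <;> omega
    have h2ta : ¬ (2 * t = a) := fun h => htb ⟨h, hlt⟩
    refine ⟨⟨by omega, by omega⟩, by rw [ndist]; omega, by omega, by omega⟩

lemma card_classSet {Δ a d : ℕ} (hΔ : 2 ≤ Δ) (ha1 : 1 ≤ a) (hak : a ≤ 2*Δ+1) :
    Δ - 1 ≤ (classSet (2*Δ+1) a d).card := by
  set k := 2*Δ+1 with hk
  set T := max (a-1) (k-a) with hT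
  rcases Nat.lt_or_ge a (Δ+1) with hsmall | hbig
  · -- a ≤ Δ : exclude {a, d}
    have hsub : Finset.Icc 1 T \ {a, d} ⊆ classSet k a d := by
      intro t htm
      rw [Finset.mem_sdiff, Finset.mem_Icc] at htm
      obtain ⟨⟨h1, h2⟩, h3⟩ := htm
      simp only [Finset.mem_insert, Finset.mem_singleton, not_or] at h3
      rw [mem_classSet]
      exact ⟨⟨h1, h2⟩, h3.1, h3.2, by omega⟩
    calc Δ - 1 ≤ (Finset.Icc 1 T).card - ({a, d} : Finset ℕ).card := by
          rw [Nat.card_Icc]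
          have : ({a, d} : Finset ℕ).card ≤ 2 := card_insert_le _ _ |>.trans (by simp)
          have : T = k - a := by omega
          omega
      _ ≤ (Finset.Icc 1 T \ {a, d}).card := Finset.le_card_sdiff _ _
      _ ≤ _ := Finset.card_le_card hsub
  rcases Nat.eq_or_lt_of_le hbig with heq | hbig2
  · -- a = Δ+1 : exclude {d}
    have hsub : Finset.Icc 1 T \ {d} ⊆ classSet k a d := by
      intro t htm
      rw [Finset.mem_sdiff, Finset.mem_Icc, Finset.mem_singleton] at htm
      obtain ⟨⟨h1, h2⟩, h3⟩ := htm
      have hTv : T = Δ := by omega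
      rw [mem_classSet]
      exact ⟨⟨h1, h2⟩, by omega, h3, by omega⟩
    calc Δ - 1 ≤ (Finset.Icc 1 T).card - ({d} : Finset ℕ).card := by
          rw [Nat.card_Icc, Finset.card_singleton]; omega
      _ ≤ _ := (Finset.le_card_sdiff _ _).trans (Finset.card_le_card hsub)
  · -- a ≥ Δ+2 : exclude {d, a/2}
    have hTv : T = a - 1 := by omega
    have hsub : Finset.Icc 1 T \ {d, a/2} ⊆ classSet k a d := by
      intro t htm
      rw [Finset.mem_sdiff, Finset.mem_Icc] at htm
      obtain ⟨⟨h1, h2⟩, h3⟩ := htm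
      simp only [Finset.mem_insert, Finset.mem_singleton, not_or] at h3
      rw [mem_classSet]
      exact ⟨⟨h1, h2⟩, by omega, h3.1, by omega⟩
    calc Δ - 1 ≤ (Finset.Icc 1 T).card - ({d, a/2} : Finset ℕ).card := by
          rw [Nat.card_Icc]
          have : ({d, a/2} : Finset ℕ).card ≤ 2 := card_insert_le _ _ |>.trans (by simp)
          omega
      _ ≤ _ := (Finset.le_card_sdiff _ _).trans (Finset.card_le_card hsub)

lemma card_classSet_root {Δ : ℕ} (hΔ : 2 ≤ Δ) :
    Δ ≤ (classSet (2*Δ+1) 1 0).card := by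
  have hsub : Finset.Icc 2 (2*Δ) ⊆ classSet (2*Δ+1) 1 0 := by
    intro t htm
    rw [Finset.mem_Icc] at htm
    rw [mem_classSet]
    constructor
    · constructor
      · omega
      · have : max (1-1) (2*Δ+1-1) = 2*Δ := by omega
        omega
    · exact ⟨by omega, by omega, by omega⟩
  calc Δ ≤ (Finset.Icc 2 (2*Δ)).card := by rw [Nat.card_Icc]; omega
    _ ≤ _ := Finset.card_le_card hsub

/-- a deterministic injection of `s` into `t` when `s.card ≤ t.card`. -/
noncomputable def pick {α β : Type*} [Nonempty β] (s : Finset α) (t : Finset β) : α → β :=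
  open scoped Classical in
  if h : ∃ f : α → β, (∀ x ∈ s, f x ∈ t) ∧ Set.InjOn f ↑s then h.choose
  else fun _ => Classical.arbitrary β

lemma pick_spec {α β : Type*} [Nonempty β] (s : Finset α) (t : Finset β)
    (h : s.card ≤ t.card) :
    (∀ x ∈ s, pick s t x ∈ t) ∧ Set.InjOn (pick s t) ↑s := by
  have hex : ∃ f : α → β, (∀ x ∈ s, f x ∈ t) ∧ Set.InjOn f ↑s := by
    obtain ⟨f, hmap, hinj⟩ := Set.Finite.exists_injOn_of_encard_le (s.finite_toSet)
      (t := (↑t : Set β)) (by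
        rw [Set.encard_coe_eq_coe_finsetCard, Set.encard_coe_eq_coe_finsetCard]
        exact_mod_cast h)
    exact ⟨f, fun x hx => by simpa using hmap (by simpa using hx), hinj⟩
  rw [pick]
  rw [dif_pos hex]
  exact hex.choose_spec

end TDAux

namespace TDAux2
open SimpleGraph TDAux

variable {V : Type*} (G : SimpleGraph V) (r : V)

/-- the parent of `v` in the tree rooted at `r` (is `r` itself for `v = r`). -/
noncomputable def par (v : V) : V :=
  open scoped Classical in
  if h : ∃ u, G.Adj u v ∧ G.dist r u + 1 = G.dist r v then h.choose else r

variable {G r}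

lemma exists_par (hT : G.IsTree) {v : V} (hv : v ≠ r) :
    ∃ u, G.Adj u v ∧ G.dist r u + 1 = G.dist r v := by
  have hconn := hT.isConnected
  obtain ⟨q, hq, hlen⟩ := hconn.exists_path_of_dist v r
  have hpos : 0 < G.dist v r := hconn.pos_dist_of_ne hv
  have hnil : ¬ q.Nil := by rw [SimpleGraph.Walk.nil_iff_length_eq]; omega
  have hadj : G.Adj (q.getVert 1) v := (q.adj_snd hnil).symm
  have htail : (q.tail).length + 1 = q.length := SimpleGraph.Walk.length_tail_add_one hnil
  have h1 : G.dist (q.getVert 1) r ≤ q.tail.length := SimpleGraph.dist_le q.tail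
  have h2 : G.dist r v ≤ G.dist r (q.getVert 1) + G.dist (q.getVert 1) v :=
    hconn.dist_triangle
  have h3 : G.dist (q.getVert 1) v = 1 := by
    rw [SimpleGraph.dist_eq_one_iff_adj]; exact hadj
  have h4 : G.dist r (q.getVert 1) = G.dist (q.getVert 1) r := SimpleGraph.dist_comm
  have h5 : G.dist r v = G.dist v r := SimpleGraph.dist_comm
  exact ⟨q.getVert 1, hadj, by omega⟩

lemma par_spec (hT : G.IsTree) {v : V} (hv : v ≠ r) :
    G.Adj (par G r v) v ∧ G.dist r (par G r v) + 1 = G.dist r v := by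
  rw [par, dif_pos (exists_par hT hv)]
  exact (exists_par hT hv).choose_spec

lemma par_root : par G r r = r := by
  rw [par, dif_neg]
  rintro ⟨u, -, hd⟩
  rw [SimpleGraph.dist_self] at hd
  omega

/-- adjacent vertices of a tree are at different distances from the root. -/
lemma adj_dist_ne (hT : G.IsTree) {u v : V} (huv : G.Adj u v) :
    G.dist r u ≠ G.dist r v := by
  classical
  intro heq
  have hconn := hT.isConnected
  obtain ⟨q, hq, hlen⟩ := hconn.exists_path_of_dist r v
  by_cases hu : u ∈ q.support
  · have h1 : G.dist r u ≤ (q.takeUntil u hu).length := SimpleGraph.dist_le _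
    have h2 : G.dist u v ≤ (q.dropUntil u hu).length := SimpleGraph.dist_le _
    have h3 : (q.takeUntil u hu).length + (q.dropUntil u hu).length = q.length := by
      have := congr_arg SimpleGraph.Walk.length (q.take_spec hu)
      rwa [SimpleGraph.Walk.length_append] at this
    have h4 : G.dist u v = 1 := by rw [SimpleGraph.dist_eq_one_iff_adj]; exact huv
    omega
  · obtain ⟨p, hp, hplen⟩ := hconn.exists_path_of_dist r u
    have hq' : (q.concat huv.symm).IsPath := by
      rw [SimpleGraph.Walk.isPath_def, SimpleGraph.Walk.support_concat]
      rw [SimpleGraph.Walk.isPath_def] at hq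
      simp [List.concat_eq_append, List.nodup_append, hq, hu]
      intro a ha h; subst h; exact hu ha
    have := (hT.existsUnique_path r u).unique hp hq'
    have hlen2 : (q.concat huv.symm).length = q.length + 1 :=
      SimpleGraph.Walk.length_concat _ _
    rw [this] at hplen
    omega

lemma par_unique (hT : G.IsTree) {u w v : V} (hu : G.Adj u v) (hw : G.Adj w v)
    (hdu : G.dist r u + 1 = G.dist r v) (hdw : G.dist r w + 1 = G.dist r v) : u = w := by
  have hconn := hT.isConnected
  obtain ⟨pu, hpu, hlu⟩ := hconn.exists_path_of_dist r u
  obtain ⟨pw, hpw, hlw⟩ := hconn.exists_path_of_dist r w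
  have hPu : (pu.concat hu).IsPath := by
    apply SimpleGraph.Walk.isPath_of_length_eq_dist
    rw [SimpleGraph.Walk.length_concat]; omega
  have hPw : (pw.concat hw).IsPath := by
    apply SimpleGraph.Walk.isPath_of_length_eq_dist
    rw [SimpleGraph.Walk.length_concat]; omega
  have heq : pu.concat hu = pw.concat hw := (hT.existsUnique_path r v).unique hPu hPw
  have h1 : (pu.concat hu).getVert (G.dist r u) = u := by
    rw [SimpleGraph.Walk.concat, SimpleGraph.Walk.getVert_append]
    rw [if_neg (by omega), hlu]
    simp
  have h2 : (pw.concat hw).getVert (G.dist r w) = w := by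
    rw [SimpleGraph.Walk.concat, SimpleGraph.Walk.getVert_append]
    rw [if_neg (by omega), hlw]
    simp
  have hd : G.dist r u = G.dist r w := by omega
  rw [← h1, heq, hd, h2]

end TDAux2

namespace TDAux3
open SimpleGraph TDAux TDAux2

variable {V : Type*} [Fintype V] {G : SimpleGraph V} [DecidableRel G.Adj] {r : V}

/-- the children of `v` in the tree rooted at `r`. -/
noncomputable def chd (G : SimpleGraph V) [DecidableRel G.Adj] (r v : V) : Finset V :=
  letI := Classical.decEq V
  G.neighborFinset v \ {par G r v}

lemma mem_chd {u v : V} : u ∈ chd G r v ↔ G.Adj v u ∧ u ≠ par G r v := by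
  classical
  simp [chd]

omit [Fintype V] [DecidableRel G.Adj] in
lemma dist_par_lt (hT : G.IsTree) {v : V} (hv : v ≠ r) :
    G.dist r (par G r v) < G.dist r v := by
  have := (par_spec hT hv).2
  omega

omit [Fintype V] [DecidableRel G.Adj] in
lemma dist_par_le (hT : G.IsTree) (v : V) :
    G.dist r (par G r v) ≤ G.dist r v := by
  by_cases hv : v = r
  · subst hv; rw [par_root]
  · exact (dist_par_lt hT hv).le

lemma adj_orient (hT : G.IsTree) {u v : V} (huv : G.Adj u v) :
    (par G r v = u ∧ G.dist r u + 1 = G.dist r v) ∨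
      (par G r u = v ∧ G.dist r v + 1 = G.dist r u) := by
  have hne := adj_dist_ne (r := r) hT huv
  have hconn := hT.isConnected
  have h1 : G.dist r v ≤ G.dist r u + G.dist u v := hconn.dist_triangle
  have h2 : G.dist r u ≤ G.dist r v + G.dist v u := hconn.dist_triangle
  have h3 : G.dist u v = 1 := by rw [SimpleGraph.dist_eq_one_iff_adj]; exact huv
  have h4 : G.dist v u = 1 := by rw [SimpleGraph.dist_eq_one_iff_adj]; exact huv.symm
  rcases lt_or_gt_of_ne hne with hlt | hgt
  · left
    have hd : G.dist r u + 1 = G.dist r v := by omega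
    have hv : v ≠ r := by
      intro h; subst h; rw [SimpleGraph.dist_self] at hd; omega
    obtain ⟨hpadj, hpd⟩ := par_spec hT hv
    exact ⟨par_unique hT hpadj huv hpd hd, hd⟩
  · right
    have hd : G.dist r v + 1 = G.dist r u := by omega
    have hu : u ≠ r := by
      intro h; subst h; rw [SimpleGraph.dist_self] at hd; omega
    obtain ⟨hpadj, hpd⟩ := par_spec hT hu
    exact ⟨par_unique hT hpadj huv.symm hpd hd, hd⟩

lemma mem_chd_orient (hT : G.IsTree) {u v : V} (hm : u ∈ chd G r v) :
    par G r u = v ∧ u ≠ r ∧ G.dist r v + 1 = G.dist r u := by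
  rw [mem_chd] at hm
  obtain ⟨hadj, hne⟩ := hm
  rcases adj_orient hT hadj with ⟨h1, h2⟩ | ⟨h1, h2⟩
  · refine ⟨h1, ?_, h2⟩
    intro h; subst h; rw [SimpleGraph.dist_self] at h2; omega
  · exact absurd h1.symm hne

lemma chd_card_le (hT : G.IsTree) {v : V} (hv : v ≠ r) :
    (chd G r v).card + 1 ≤ G.degree v := by
  classical
  have hmem : par G r v ∈ G.neighborFinset v := by
    rw [SimpleGraph.mem_neighborFinset]
    exact (par_spec hT hv).1.symm
  have : (chd G r v).card = (G.neighborFinset v).card - 1 := by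
    rw [chd]
    rw [Finset.card_sdiff_of_subset (by simpa using hmem)]
    simp
  rw [this, ← SimpleGraph.card_neighborFinset_eq_degree]
  have : 1 ≤ (G.neighborFinset v).card := Finset.card_pos.mpr ⟨_, hmem⟩
  omega

lemma chd_card_le_root : (chd G r r).card ≤ G.degree r := by
  classical
  rw [← SimpleGraph.card_neighborFinset_eq_degree]
  apply Finset.card_le_card
  rw [chd]
  exact Finset.sdiff_subset

/-- the labeling. -/
noncomputable def lab {V : Type*} [Fintype V] (G : SimpleGraph V) [DecidableRel G.Adj]
    (r : V) (hT : G.IsTree) (Δ : ℕ) (v : V) : ℕ :=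
  open scoped Classical in
  if hv : v = r then 1
  else
    rep (2*Δ+1) (lab G r hT Δ (par G r v))
      (pick (chd G r (par G r v))
        (classSet (2*Δ+1) (lab G r hT Δ (par G r v))
          (Nat.dist (lab G r hT Δ (par G r v)) (lab G r hT Δ (par G r (par G r v))))) v)
termination_by G.dist r v
decreasing_by
  · exact dist_par_lt hT hv
  · exact lt_of_le_of_lt (dist_par_le hT _) (dist_par_lt hT hv)

lemma lab_root (hT : G.IsTree) (Δ : ℕ) : lab G r hT Δ r = 1 := by
  rw [lab]
  simp

lemma lab_ne (hT : G.IsTree) (Δ : ℕ) {v : V} (hv : v ≠ r) :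
    lab G r hT Δ v =
      rep (2*Δ+1) (lab G r hT Δ (par G r v))
        (pick (chd G r (par G r v))
          (classSet (2*Δ+1) (lab G r hT Δ (par G r v))
            (Nat.dist (lab G r hT Δ (par G r v)) (lab G r hT Δ (par G r (par G r v))))) v) := by
  conv_lhs => rw [lab]
  simp only [dif_neg hv]

end TDAux3

namespace TDAux4
open SimpleGraph TDAux TDAux2 TDAux3

variable {V : Type*} [Fintype V] {G : SimpleGraph V} [DecidableRel G.Adj] {r : V}
  {Δ : ℕ}

/-- the class set used at vertex `p`. -/
noncomputable def CS {V' : Type*} [Fintype V'] (G' : SimpleGraph V') [DecidableRel G'.Adj]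
    (r' : V') (hT : G'.IsTree) (Δ' : ℕ) (p : V') : Finset ℕ :=
  classSet (2*Δ'+1) (lab G' r' hT Δ' p)
    (Nat.dist (lab G' r' hT Δ' p) (lab G' r' hT Δ' (par G' r' p)))

lemma chd_card_le_CS (hT : G.IsTree) (hΔ : 2 ≤ Δ) (hdeg : ∀ v, G.degree v ≤ Δ)
    {p : V} (hb : 1 ≤ lab G r hT Δ p ∧ lab G r hT Δ p ≤ 2*Δ+1) :
    (chd G r p).card ≤ (CS G r hT Δ p).card := by
  by_cases hp : p = r
  · have h1 : lab G r hT Δ p = 1 := by rw [hp]; exact lab_root hT Δ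
    have h2 : Nat.dist (lab G r hT Δ p) (lab G r hT Δ (par G r p)) = 0 := by
      rw [hp, par_root, Nat.dist_self]
    rw [CS, h2, h1]
    calc (chd G r p).card ≤ G.degree p := by
          rw [hp]; exact chd_card_le_root
      _ ≤ Δ := hdeg p
      _ ≤ _ := card_classSet_root hΔ
  · have h1 := chd_card_le hT hp
    have h2 := hdeg p
    calc (chd G r p).card ≤ Δ - 1 := by omega
      _ ≤ _ := card_classSet hΔ hb.1 hb.2

lemma child_pick (hT : G.IsTree) (hΔ : 2 ≤ Δ) (hdeg : ∀ v, G.degree v ≤ Δ)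
    {p v : V} (hm : v ∈ chd G r p)
    (hb : 1 ≤ lab G r hT Δ p ∧ lab G r hT Δ p ≤ 2*Δ+1) :
    pick (chd G r p) (CS G r hT Δ p) v ∈ CS G r hT Δ p ∧
      lab G r hT Δ v = rep (2*Δ+1) (lab G r hT Δ p)
        (pick (chd G r p) (CS G r hT Δ p) v) := by
  obtain ⟨hpar, hvr, hd⟩ := mem_chd_orient hT hm
  have hps := pick_spec (chd G r p) (CS G r hT Δ p) (chd_card_le_CS hT hΔ hdeg hb)
  refine ⟨hps.1 v hm, ?_⟩
  rw [lab_ne hT Δ hvr, hpar]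
  rfl

lemma lab_bounds (hT : G.IsTree) (hΔ : 2 ≤ Δ) (hdeg : ∀ v, G.degree v ≤ Δ) (v : V) :
    1 ≤ lab G r hT Δ v ∧ lab G r hT Δ v ≤ 2*Δ+1 := by
  have key : ∀ n v, G.dist r v ≤ n → 1 ≤ lab G r hT Δ v ∧ lab G r hT Δ v ≤ 2*Δ+1 := by
    intro n
    induction n with
    | zero =>
      intro v hv
      have : r = v := (hT.isConnected.dist_eq_zero_iff).mp (by omega)
      subst this
      rw [lab_root]
      omega
    | succ n ih =>
      intro v hv
      by_cases hvr : v = r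
      · subst hvr; rw [lab_root]; omega
      · obtain ⟨hadj, hdist⟩ := par_spec hT hvr
        have hb := ih (par G r v) (by omega)
        have hm : v ∈ chd G r (par G r v) := by
          rw [mem_chd]
          refine ⟨hadj, ?_⟩
          intro h
          have h2 := dist_par_le (r := r) hT (par G r v)
          rw [← h] at h2
          omega
        obtain ⟨hmem, hlab⟩ := child_pick hT hΔ hdeg hm hb
        rw [hlab]
        exact (rep_spec hb.1 hb.2 hmem).1
  exact key (G.dist r v) v le_rfl

lemma child_edge (hT : G.IsTree) (hΔ : 2 ≤ Δ) (hdeg : ∀ v, G.degree v ≤ Δ)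
    {p v : V} (hm : v ∈ chd G r p) :
    Nat.dist (lab G r hT Δ p) (lab G r hT Δ v) = pick (chd G r p) (CS G r hT Δ p) v ∧
      pick (chd G r p) (CS G r hT Δ p) v ∈ CS G r hT Δ p := by
  have hb := lab_bounds (r := r) hT hΔ hdeg p
  obtain ⟨hmem, hlab⟩ := child_pick hT hΔ hdeg hm hb
  refine ⟨?_, hmem⟩
  rw [hlab]
  exact (rep_spec hb.1 hb.2 hmem).2.1

lemma adj_chd (hT : G.IsTree) {u v : V} (huv : G.Adj u v) :
    v ∈ chd G r u ∨ u ∈ chd G r v := by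
  rcases adj_orient (r := r) hT huv with ⟨h1, h2⟩ | ⟨h1, h2⟩
  · left
    rw [mem_chd]
    refine ⟨huv, ?_⟩
    intro h
    have h3 := dist_par_le (r := r) hT u
    rw [← h] at h3
    omega
  · right
    rw [mem_chd]
    refine ⟨huv.symm, ?_⟩
    intro h
    have h3 := dist_par_le (r := r) hT v
    rw [← h] at h3
    omega

lemma upper (hT : G.IsTree) (hΔ : 2 ≤ Δ) (hdeg : ∀ v, G.degree v ≤ Δ) :
    IsTotalDiffLabeling G (2*Δ+1) (lab G r hT Δ) := by
  have hedge : ∀ u v : V, G.Adj u v → v ∈ chd G r u →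
      1 ≤ Nat.dist (lab G r hT Δ u) (lab G r hT Δ v) ∧
      Nat.dist (lab G r hT Δ u) (lab G r hT Δ v) ≠ lab G r hT Δ u ∧
      Nat.dist (lab G r hT Δ u) (lab G r hT Δ v) ≠ lab G r hT Δ v := by
    intro u v huv hm
    obtain ⟨hd, hmem⟩ := child_edge hT hΔ hdeg hm
    rw [CS, mem_classSet] at hmem
    have hb := lab_bounds (r := r) hT hΔ hdeg u
    have hrep := (rep_spec hb.1 hb.2 (child_pick hT hΔ hdeg hm hb).1).2.2.2
    have hlab := (child_pick hT hΔ hdeg hm hb).2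
    refine ⟨?_, ?_, ?_⟩
    · rw [hd]; exact hmem.1.1
    · rw [hd]; exact hmem.2.1
    · rw [hd, hlab]; exact fun h => hrep h.symm
  refine ⟨lab_bounds (r := r) hT hΔ hdeg, ?_, ?_, ?_⟩
  · intro u v huv
    rcases adj_chd hT huv with hm | hm
    · have := (hedge u v huv hm).1
      rw [ndist] at this
      omega
    · have := (hedge v u huv.symm hm).1
      rw [ndist] at this
      omega
  · intro u v huv
    rcases adj_chd hT huv with hm | hm
    · exact ⟨(hedge u v huv hm).2.1, (hedge u v huv hm).2.2⟩
    · have h := hedge v u huv.symm hm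
      rw [Nat.dist_comm]
      exact ⟨h.2.2, h.2.1⟩
  · intro u v w huv hvw hne
    -- each of u, w is either the parent of v or a child of v
    have hvu : G.Adj v u := huv.symm
    have hcase : ∀ x : V, G.Adj v x → x = par G r v ∨ x ∈ chd G r v := by
      intro x hx
      by_cases h : x = par G r v
      · exact Or.inl h
      · exact Or.inr (by rw [mem_chd]; exact ⟨hx, h⟩)
    have hbv := lab_bounds (r := r) hT hΔ hdeg v
    rcases hcase u hvu with hu | hu <;> rcases hcase w hvw with hw | hw
    · exact absurd (hu.trans hw.symm) hne
    · -- u parent, w child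
      obtain ⟨hdw, hmw⟩ := child_edge hT hΔ hdeg hw
      rw [CS, mem_classSet] at hmw
      have : Nat.dist (lab G r hT Δ u) (lab G r hT Δ v) =
          Nat.dist (lab G r hT Δ v) (lab G r hT Δ (par G r v)) := by
        rw [hu, Nat.dist_comm]
      rw [this, hdw]
      exact fun h => hmw.2.2.1 h.symm
    · -- u child, w parent
      obtain ⟨hdu, hmu⟩ := child_edge hT hΔ hdeg hu
      rw [CS, mem_classSet] at hmu
      have h2 : Nat.dist (lab G r hT Δ v) (lab G r hT Δ w) =
          Nat.dist (lab G r hT Δ v) (lab G r hT Δ (par G r v)) := by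
        rw [hw]
      rw [h2, Nat.dist_comm (lab G r hT Δ u), hdu]
      exact hmu.2.2.1
    · -- both children
      obtain ⟨hdu, -⟩ := child_edge hT hΔ hdeg hu
      obtain ⟨hdw, -⟩ := child_edge hT hΔ hdeg hw
      have hinj := (pick_spec (chd G r v) (CS G r hT Δ v)
        (chd_card_le_CS hT hΔ hdeg hbv)).2
      rw [Nat.dist_comm (lab G r hT Δ u), hdu, hdw]
      intro h
      exact hne (hinj hu hw h)

end TDAux4

namespace TDAux5
open SimpleGraph TDAux Finset

variable {V : Type*} [Fintype V] {G : SimpleGraph V} [DecidableRel G.Adj]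

/-- at a vertex of degree `Δ`, the label is either large or small. -/
lemma vertex_dichotomy {k Δ : ℕ} {c : V → ℕ} (hc : IsTotalDiffLabeling G k c)
    {v : V} (hdeg : G.degree v = Δ) (hΔ : 2 ≤ Δ) :
    Δ + 1 ≤ c v ∨ Δ + c v + 1 ≤ k := by
  classical
  obtain ⟨hb, hprop, hinc, hshare⟩ := hc
  by_cases hbig : Δ + 1 ≤ c v
  · exact Or.inl hbig
  right
  set a := c v with ha
  set M := max (a - 1) (k - a) with hM
  set φ : V → ℕ := fun u => Nat.dist (c v) (c u) with hφ
  have hinj : Set.InjOn φ (G.neighborFinset v) := by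
    intro x hx y hy hxy
    by_contra hne
    simp only [Finset.mem_coe, SimpleGraph.mem_neighborFinset] at hx hy
    apply hshare x v y hx.symm hy hne
    rw [Nat.dist_comm]
    exact hxy
  have himg : ∀ u ∈ G.neighborFinset v, φ u ∈ (Finset.Icc 1 M).erase a := by
    intro u hu
    rw [SimpleGraph.mem_neighborFinset] at hu
    have h1 : c u ≠ c v := (hprop v u hu).symm
    have h2 := hb u
    have h3 := hb v
    rw [Finset.mem_erase, Finset.mem_Icc]
    refine ⟨(hinc v u hu).1, ?_, ?_⟩
    · rw [hφ]; simp only [ndist]; omega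
    · rw [hφ]; simp only [ndist]; omega
  have hcard : Δ ≤ ((Finset.Icc 1 M).erase a).card := by
    rw [← hdeg, ← SimpleGraph.card_neighborFinset_eq_degree]
    exact Finset.card_le_card_of_injOn φ himg hinj
  have hcard2 : ((Finset.Icc 1 M).erase a).card ≤ M := by
    calc _ ≤ (Finset.Icc 1 M).card := Finset.card_erase_le
      _ = M := by rw [Nat.card_Icc]; omega
  have h3 := hb v
  -- M must be k - a and a must lie in the interval
  have haM : a ≤ M := by omega
  have hmem : a ∈ Finset.Icc 1 M := by rw [Finset.mem_Icc]; omega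
  have : ((Finset.Icc 1 M).erase a).card = M - 1 := by
    rw [Finset.card_erase_of_mem hmem, Nat.card_Icc]
    omega
  omega

lemma lower_bound {k Δ h : ℕ} {c : V → ℕ} {r : V} (hc : IsTotalDiffLabeling G k c)
    (hΔ : 2 ≤ Δ) (hh : 2 ≤ h)
    (hdeg : ∀ v : V, G.dist r v < h → G.degree v = Δ) :
    3 * Δ + 2 ≤ 2 * k := by
  classical
  have hdegr : G.degree r = Δ := hdeg r (by rw [SimpleGraph.dist_self]; omega)
  obtain ⟨hb, hprop, hinc, hshare⟩ := hc
  have hinj : Set.InjOn c (G.neighborFinset r) := by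
    intro x hx y hy hxy
    by_contra hne
    simp only [Finset.mem_coe, SimpleGraph.mem_neighborFinset] at hx hy
    apply hshare x r y hx.symm hy hne
    rw [Nat.dist_comm, hxy]
  set S : Finset ℕ := ((Finset.Icc 1 (k-Δ-1)) ∪ (Finset.Icc (Δ+1) k)).erase (c r) with hS
  have himg : ∀ u ∈ G.neighborFinset r, c u ∈ S := by
    intro u hu
    rw [SimpleGraph.mem_neighborFinset] at hu
    have hdegu : G.degree u = Δ := by
      apply hdeg
      have : G.dist r u = 1 := by rw [SimpleGraph.dist_eq_one_iff_adj]; exact hu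
      omega
    have hdich := vertex_dichotomy ⟨hb, hprop, hinc, hshare⟩ hdegu hΔ
    have hbu := hb u
    rw [hS, Finset.mem_erase, Finset.mem_union, Finset.mem_Icc, Finset.mem_Icc]
    refine ⟨(hprop r u hu).symm, ?_⟩
    omega
  have hmemr : c r ∈ (Finset.Icc 1 (k-Δ-1)) ∪ (Finset.Icc (Δ+1) k) := by
    have hdich := vertex_dichotomy ⟨hb, hprop, hinc, hshare⟩ hdegr hΔ
    have hbr := hb r
    rw [Finset.mem_union, Finset.mem_Icc, Finset.mem_Icc]
    omega
  have hcard : Δ ≤ S.card := by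
    rw [← hdegr, ← SimpleGraph.card_neighborFinset_eq_degree]
    exact Finset.card_le_card_of_injOn c himg hinj
  have hcard2 : S.card = ((Finset.Icc 1 (k-Δ-1)) ∪ (Finset.Icc (Δ+1) k)).card - 1 := by
    rw [hS, Finset.card_erase_of_mem hmemr]
  have hcard3 : ((Finset.Icc 1 (k-Δ-1)) ∪ (Finset.Icc (Δ+1) k)).card ≤ (k-Δ-1) + (k-Δ) := by
    calc _ ≤ (Finset.Icc 1 (k-Δ-1)).card + (Finset.Icc (Δ+1) k).card :=
        Finset.card_union_le _ _
      _ ≤ _ := by rw [Nat.card_Icc, Nat.card_Icc]; omega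
  omega

end TDAux5

/-- For `Δ ≥ 2` and `h ≥ 2`, the uniform full `Δ`-ary tree of height `h` satisfies
`⌊(3Δ + 3) / 2⌋ ≤ χ_td(T_{Δ,h}) ≤ 2Δ + 1`. -/
theorem tdChromatic_uniformFullTree {V : Type*} [Fintype V]
    (G : SimpleGraph V) [DecidableRel G.Adj] (Δ h : ℕ) (hΔ : 2 ≤ Δ) (hh : 2 ≤ h)
    (r : V) (hG : IsUniformFullTree G Δ h r) :
    (3 * Δ + 3) / 2 ≤ tdChromatic G ∧ tdChromatic G ≤ 2 * Δ + 1 := by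
  obtain ⟨hT, hle, hint, hleaf⟩ := hG
  have hdegall : ∀ v, G.degree v ≤ Δ := by
    intro v
    rcases lt_or_eq_of_le (hle v) with hlt | heq
    · rw [hint v hlt]
    · rw [hleaf v heq]; omega
  have hmem : (2*Δ+1) ∈ {k | ∃ c : V → ℕ, IsTotalDiffLabeling G k c} :=
    ⟨TDAux3.lab G r hT Δ, TDAux4.upper hT hΔ hdegall⟩
  constructor
  · have hne : Set.Nonempty {k | ∃ c : V → ℕ, IsTotalDiffLabeling G k c} := ⟨_, hmem⟩
    have h1 : tdChromatic G ∈ {k | ∃ c : V → ℕ, IsTotalDiffLabeling G k c} := by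
      rw [tdChromatic]; exact Nat.sInf_mem hne
    obtain ⟨c, hc⟩ := h1
    have h2 := TDAux5.lower_bound hc hΔ hh hint
    omega
  · rw [tdChromatic]
    exact Nat.sInf_le hmem
end

section
/- For every finite tree T with maximum degree Δ, the total difference chromatic number satisfies Δ + 1 ≤ χ_td(T) ≤ 2Δ + 1. -/
open SimpleGraph

lemma key_choice (Δ cp : ℕ) (S : Finset ℕ) (hΔ : 1 ≤ Δ) (hcp : 1 ≤ cp)
    (hS : S.card ≤ Δ - 1) :
    ∃ x, 1 ≤ x ∧ x ≤ 2*Δ+1 ∧ x ≠ cp ∧ Nat.dist x cp ≠ x ∧ Nat.dist x cp ≠ cp ∧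
      Nat.dist x cp ∉ S := by
  classical
  have main : ∃ x ∈ Finset.Icc 1 (2*Δ+1), x ∉ (insert cp (insert (2*cp) (insert (cp/2) ((S.image (fun d => cp + d)) ∪ (S.image (fun d => cp - d)))))) := by
    by_cases hsmall : cp ≤ Δ ∧ ∀ d ∈ S, d < cp
    · refine ⟨2*Δ+1, by simp, ?_⟩
      have h2 : cp / 2 ≤ cp := Nat.div_le_self _ _
      simp only [Finset.mem_insert, Finset.mem_union, Finset.mem_image]
      push_neg
      refine ⟨by omega, by omega, by omega, ?_, ?_⟩
      · rintro d hd
        have := hsmall.2 d hd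
        omega
      · rintro d hd
        have := hsmall.2 d hd
        omega
    · by_contra hcon
      push_neg at hcon
      have hsub : ∀ x ∈ Finset.Icc 1 (2*Δ+1), x ∈ (insert cp (insert (2*cp) (insert (cp/2) ((S.image (fun d => cp + d)) ∪ (S.image (fun d => cp - d)))))) := fun x hx => hcon x hx
      rcases not_and_or.mp hsmall with hbig | hex
      · -- case cp ≥ Δ + 1
        push_neg at hbig
        have hsub2 : Finset.Icc 1 (2*Δ+1) ⊆ insert cp (insert (cp/2) ((S.image (fun d => cp + d)) ∪ (S.image (fun d => cp - d)))) := by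
          intro x hx
          have hxk := Finset.mem_Icc.mp hx
          have := hsub x hx
          simp only [Finset.mem_insert] at this ⊢
          rcases this with h|h|h|h
          · tauto
          · omega
          · tauto
          · tauto
        have h1 := Finset.card_le_card hsub2
        have h2 : (insert cp (insert (cp/2) ((S.image (fun d => cp + d)) ∪ (S.image (fun d => cp - d))))).card ≤ 2 + ((S.image (fun d => cp + d)) ∪ (S.image (fun d => cp - d))).card := by
          refine le_trans (Finset.card_insert_le _ _) ?_
          have := Finset.card_insert_le (cp/2) ((S.image (fun d => cp + d)) ∪ (S.image (fun d => cp - d)))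
          omega
        have h3 : ((S.image (fun d => cp + d)) ∪ (S.image (fun d => cp - d))).card ≤ S.card + S.card := by
          have i1 : (S.image (fun d => cp + d)).card ≤ S.card := Finset.card_image_le
          have i2 : (S.image (fun d => cp - d)).card ≤ S.card := Finset.card_image_le
          have i3 := Finset.card_union_le (S.image (fun d => cp + d)) (S.image (fun d => cp - d))
          omega
        rw [Nat.card_Icc] at h1
        omega
      · push_neg at hex
        obtain ⟨d0, hd0S, hd0⟩ := hex
        have h0mem : (0:ℕ) ∈ S.image (fun d => cp - d) :=
          Finset.mem_image.mpr ⟨d0, hd0S, by omega⟩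
        have hScard : 1 ≤ S.card := Finset.card_pos.mpr ⟨d0, hd0S⟩
        have hsub2 : Finset.Icc 1 (2*Δ+1) ⊆ insert cp (insert (2*cp) (insert (cp/2)
            ((S.image (fun d => cp + d)) ∪ (S.image (fun d => cp - d)).erase 0))) := by
          intro x hx
          have hxk := Finset.mem_Icc.mp hx
          have := hsub x hx
          simp only [Finset.mem_insert, Finset.mem_union, Finset.mem_erase] at this ⊢
          rcases this with h|h|h|h|h
          · tauto
          · tauto
          · tauto
          · tauto
          · right; right; right; right; exact ⟨by omega, h⟩
        have h1 := Finset.card_le_card hsub2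
        have h2 : (insert cp (insert (2*cp) (insert (cp/2)
            ((S.image (fun d => cp + d)) ∪ (S.image (fun d => cp - d)).erase 0)))).card ≤
            3 + ((S.image (fun d => cp + d)).card + ((S.image (fun d => cp - d)).erase 0).card) := by
          have i1 := Finset.card_insert_le cp (insert (2*cp) (insert (cp/2)
            ((S.image (fun d => cp + d)) ∪ (S.image (fun d => cp - d)).erase 0)))
          have i2 := Finset.card_insert_le (2*cp) (insert (cp/2)
            ((S.image (fun d => cp + d)) ∪ (S.image (fun d => cp - d)).erase 0))
          have i3 := Finset.card_insert_le (cp/2)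
            ((S.image (fun d => cp + d)) ∪ (S.image (fun d => cp - d)).erase 0)
          have i4 := Finset.card_union_le (S.image (fun d => cp + d))
            ((S.image (fun d => cp - d)).erase 0)
          omega
        have h3 : (S.image (fun d => cp + d)).card ≤ S.card := Finset.card_image_le
        have h4 : ((S.image (fun d => cp - d)).erase 0).card =
            (S.image (fun d => cp - d)).card - 1 := Finset.card_erase_of_mem h0mem
        have h5 : (S.image (fun d => cp - d)).card ≤ S.card := Finset.card_image_le
        have h6 : 1 ≤ (S.image (fun d => cp - d)).card := Finset.card_pos.mpr ⟨0, h0mem⟩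
        rw [Nat.card_Icc] at h1
        omega
  obtain ⟨x, hx, hxF⟩ := main
  have hxk := Finset.mem_Icc.mp hx
  simp only [Finset.mem_insert, Finset.mem_union, Finset.mem_image] at hxF
  push_neg at hxF
  obtain ⟨hne, h2cp, hhalf, hplus, hminus⟩ := hxF
  have hd : Nat.dist x cp = x - cp + (cp - x) := rfl
  have hhalf' : ¬ (cp = 2 * x) := fun h => hhalf (by omega)
  refine ⟨x, hxk.1, hxk.2, hne, by omega, by omega, ?_⟩
  intro hmem
  rcases Nat.lt_or_ge x cp with h | h
  · exact hminus (Nat.dist x cp) hmem (by omega)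
  · exact hplus (Nat.dist x cp) hmem (by omega)

open SimpleGraph

lemma tdl_mono {V : Type*} {G : SimpleGraph V} {k k' : ℕ} {c : V → ℕ}
    (h : IsTotalDiffLabeling G k c) (hk : k ≤ k') : IsTotalDiffLabeling G k' c :=
  ⟨fun v => ⟨(h.1 v).1, le_trans (h.1 v).2 hk⟩, h.2.1, h.2.2.1, h.2.2.2⟩

lemma reach_induce {V : Type*} {G : SimpleGraph V} (s : Set V) :
    ∀ {u v : V} (w : G.Walk u v), (∀ y ∈ w.support, y ∈ s) →
      ∀ (hu : u ∈ s) (hv : v ∈ s), (G.induce s).Reachable ⟨u, hu⟩ ⟨v, hv⟩ := by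
  intro u v w
  induction w with
  | nil =>
    intro _ hu hv
    exact Reachable.refl _
  | @cons u b v h p ih =>
    intro hsup hu hv
    have hb : b ∈ s := hsup b (by simp)
    have hadj : (G.induce s).Adj ⟨u, hu⟩ ⟨b, hb⟩ := h
    exact (hadj.reachable).trans (ih (fun y hy => hsup y (by simp [hy])) hb hv)

lemma path_avoid {V : Type*} {G : SimpleGraph V} {x u v : V}
    (huniq : ∀ a b, G.Adj x a → G.Adj x b → a = b)
    (hu : u ≠ x) (hv : v ≠ x) (p : G.Walk u v) (hp : p.IsPath) : x ∉ p.support := by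
  classical
  intro hx
  have hspec := p.take_spec hx
  have hnodup : ((p.takeUntil x hx).support ++ (p.dropUntil x hx).support.tail).Nodup := by
    have h2 := hp.support_nodup
    rw [← hspec, Walk.support_append] at h2
    exact h2
  obtain ⟨a, ha, q, hq⟩ := Walk.exists_eq_cons_of_ne (Ne.symm hu) (p.takeUntil x hx).reverse
  obtain ⟨b, hb, r, hr⟩ := Walk.exists_eq_cons_of_ne (Ne.symm hv) (p.dropUntil x hx)
  have hab : a = b := huniq a b ha hb
  have haw1 : a ∈ (p.takeUntil x hx).support := by
    have h3 : a ∈ (p.takeUntil x hx).reverse.support := by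
      rw [hq]
      exact List.mem_cons_of_mem _ q.start_mem_support
    rwa [Walk.support_reverse, List.mem_reverse] at h3
  have hbw2 : b ∈ (p.dropUntil x hx).support.tail := by
    rw [hr, Walk.support_cons]
    exact r.start_mem_support
  rw [List.nodup_append] at hnodup
  exact hnodup.2.2 a haw1 a (hab ▸ hbw2) rfl

lemma induce_acyclic {V : Type*} {G : SimpleGraph V} (h : G.IsAcyclic) (s : Set V) :
    (G.induce s).IsAcyclic := by
  intro v c hc
  exact h (c.map (SimpleGraph.Embedding.induce (G := G) s).toHom)
    ((Walk.map_isCycle_iff_of_injective (SimpleGraph.Embedding.induce (G := G) s).injective).mpr hc)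

lemma induce_connected_of_leaf {V : Type*} {G : SimpleGraph V} {x : V}
    (hconn : G.Connected)
    (huniq : ∀ a b, G.Adj x a → G.Adj x b → a = b)
    (hne : ∃ y : V, y ≠ x) :
    (G.induce {y | y ≠ x}).Connected := by
  classical
  rw [connected_iff]
  constructor
  · rintro ⟨u, hu⟩ ⟨v, hv⟩
    obtain ⟨w⟩ := hconn.preconnected u v
    have hpath := (w.toPath : G.Path u v).2
    have hx : x ∉ (w.toPath : G.Path u v).1.support := path_avoid huniq hu hv _ hpath
    exact reach_induce _ (w.toPath : G.Path u v).1
      (fun y hy => by intro hyx; exact hx (hyx ▸ hy)) hu hv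
  · obtain ⟨y, hy⟩ := hne
    exact ⟨⟨y, hy⟩⟩

lemma exists_leaf {V : Type*} [Fintype V] (G : SimpleGraph V) [DecidableRel G.Adj]
    (htree : G.IsTree) (hcard : 2 ≤ Fintype.card V) : ∃ x, G.degree x = 1 := by
  classical
  by_contra h
  push_neg at h
  have hdeg : ∀ v, 2 ≤ G.degree v := by
    intro v
    have h1 : 1 ≤ G.degree v := by
      obtain ⟨w, hw⟩ := Fintype.exists_ne_of_one_lt_card (by omega) v
      obtain ⟨p⟩ := htree.isConnected.preconnected v w
      obtain ⟨a, ha, _, _⟩ := Walk.exists_eq_cons_of_ne (Ne.symm hw) p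
      have : a ∈ G.neighborFinset v := (mem_neighborFinset _ _ _).mpr ha
      have := Finset.card_pos.mpr ⟨a, this⟩
      exact this
    have := h v
    omega
  have hsum := G.sum_degrees_eq_twice_card_edges
  have hedge := htree.card_edgeFinset
  have h2 : 2 * Fintype.card V ≤ ∑ v, G.degree v := by
    calc 2 * Fintype.card V = ∑ _v : V, 2 := by simp [mul_comm]
    _ ≤ ∑ v, G.degree v := Finset.sum_le_sum (fun i _ => hdeg i)
  omega

universe u

lemma build_labeling : ∀ (n : ℕ) (V : Type u) [Fintype V] (G : SimpleGraph V)
    [DecidableRel G.Adj], Fintype.card V = n → G.IsTree →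
    ∃ c, IsTotalDiffLabeling G (2 * G.maxDegree + 1) c := by
  intro n
  induction n using Nat.strong_induction_on with
  | _ n IH =>
  intro V _ G _ hcard htree
  classical
  by_cases hn : Fintype.card V ≤ 1
  · have hone : ∀ u v : V, u = v := fun u v => Fintype.card_le_one_iff.mp hn u v
    refine ⟨fun _ => 1, fun v => ⟨le_refl 1, by show (1:ℕ) ≤ 2*G.maxDegree+1; omega⟩, ?_, ?_, ?_⟩
    · intro u v huv
      exact absurd (hone u v) (G.ne_of_adj huv)
    · intro u v huv
      exact absurd (hone u v) (G.ne_of_adj huv)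
    · intro u v w huv _ _
      exact absurd (hone u v) (G.ne_of_adj huv)
  · have hcard2 : 2 ≤ Fintype.card V := by omega
    obtain ⟨x, hx⟩ := exists_leaf G htree hcard2
    obtain ⟨p0, hp0⟩ := Finset.card_eq_one.mp hx
    have hadjx : G.Adj x p0 := by
      have : p0 ∈ G.neighborFinset x := by rw [hp0]; exact Finset.mem_singleton_self _
      exact (mem_neighborFinset _ _ _).mp this
    have huniq : ∀ a, G.Adj x a → a = p0 := by
      intro a ha
      have : a ∈ G.neighborFinset x := (mem_neighborFinset _ _ _).mpr ha
      rw [hp0] at this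
      exact Finset.mem_singleton.mp this
    have huniq2 : ∀ a b, G.Adj x a → G.Adj x b → a = b := fun a b ha hb =>
      (huniq a ha).trans (huniq b hb).symm
    have hΔ1 : 1 ≤ G.maxDegree := le_trans (by omega) (G.degree_le_maxDegree x)
    have hp0x : p0 ≠ x := fun h => G.irrefl (h ▸ hadjx)
    -- induced subgraph on s
    set s : Set V := {y | y ≠ x} with hs
    letI instd : DecidableRel (G.induce s).Adj := fun a b =>
      inferInstanceAs (Decidable (G.Adj a b))
    have hstree : (G.induce s).IsTree :=
      ⟨induce_connected_of_leaf htree.isConnected huniq2 ⟨p0, hp0x⟩,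
        induce_acyclic htree.IsAcyclic s⟩
    have hcards : Fintype.card s = n - 1 := by
      have h1 : Fintype.card {y : V // ¬ y = x} = Fintype.card V - 1 := by
        rw [Fintype.card_subtype_compl, Fintype.card_subtype_eq]
      rw [← hcard, ← h1]
      congr 1
    obtain ⟨c', hc'0⟩ := IH (n-1) (by omega) s (G.induce s) hcards hstree
    -- degree comparisons
    have hdegle : ∀ v : s, (G.induce s).degree v ≤ G.degree (v : V) := by
      intro v
      refine Finset.card_le_card_of_injOn (fun u : s => (u : V)) ?_ ?_
      · intro a haa
        have : (G.induce s).Adj v a := (mem_neighborFinset _ _ _).mp haa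
        exact (mem_neighborFinset _ _ _).mpr this
      · intro a _ b _ hab
        exact Subtype.ext hab
    have hΔle : (G.induce s).maxDegree ≤ G.maxDegree := by
      apply maxDegree_le_of_forall_degree_le
      intro v
      exact le_trans (hdegle v) (G.degree_le_maxDegree _)
    have hc' : IsTotalDiffLabeling (G.induce s) (2 * G.maxDegree + 1) c' :=
      tdl_mono hc'0 (by omega)
    -- the distances used at p0
    set cp : ℕ := c' ⟨p0, hp0x⟩ with hcp
    set S : Finset ℕ :=
      ((G.induce s).neighborFinset ⟨p0, hp0x⟩).image (fun u => Nat.dist (c' u) cp) with hS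
    have hScard : S.card ≤ G.maxDegree - 1 := by
      have h1 : S.card ≤ (G.induce s).degree ⟨p0, hp0x⟩ := Finset.card_image_le
      have h2 : (G.induce s).degree ⟨p0, hp0x⟩ ≤ G.degree p0 - 1 := by
        have h3 : ((G.induce s).neighborFinset ⟨p0, hp0x⟩).card ≤
            ((G.neighborFinset p0).erase x).card := by
          refine Finset.card_le_card_of_injOn (fun u : s => (u : V)) ?_ ?_
          · intro a haa
            have h4 : (G.induce s).Adj ⟨p0, hp0x⟩ a := (mem_neighborFinset _ _ _).mp haa
            refine Finset.mem_erase.mpr ⟨a.2, (mem_neighborFinset _ _ _).mpr h4⟩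
          · intro a _ b _ hab
            exact Subtype.ext hab
        have h5 : ((G.neighborFinset p0).erase x).card = G.degree p0 - 1 := by
          rw [Finset.card_erase_of_mem ((mem_neighborFinset _ _ _).mpr hadjx.symm)]
          rfl
        rw [h5] at h3
        exact h3
      have h6 := G.degree_le_maxDegree p0
      omega
    have hcp1 : 1 ≤ cp := (hc'.1 ⟨p0, hp0x⟩).1
    obtain ⟨X, hX1, hX2, hXne, hdX, hdcp, hdS⟩ := key_choice G.maxDegree cp S hΔ1 hcp1 hScard
    -- the extended labeling
    set c : V → ℕ := fun v => if h : v = x then X else c' ⟨v, h⟩ with hcdef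
    have hcx : c x = X := dif_pos rfl
    have hcs : ∀ (v : V) (hv : v ≠ x), c v = c' ⟨v, hv⟩ := fun v hv => dif_neg hv
    have hcp0 : c p0 = cp := hcs p0 hp0x
    refine ⟨c, ?_, ?_, ?_, ?_⟩
    · intro v
      by_cases h : v = x
      · rw [h, hcx]
        exact ⟨hX1, hX2⟩
      · rw [hcs v h]
        exact hc'.1 _
    · intro u v huv
      by_cases hue : u = x
      · have hv : v = p0 := huniq v (hue ▸ huv)
        rw [hue, hv, hcx, hcp0]
        exact hXne
      · by_cases hve : v = x
        · have hu : u = p0 := huniq u (hve ▸ huv.symm)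
          rw [hve, hu, hcx, hcp0]
          exact fun h => hXne h.symm
        · rw [hcs u hue, hcs v hve]
          exact hc'.2.1 ⟨u, hue⟩ ⟨v, hve⟩ huv
    · intro u v huv
      by_cases hue : u = x
      · have hv : v = p0 := huniq v (hue ▸ huv)
        rw [hue, hv, hcx, hcp0]
        exact ⟨hdX, hdcp⟩
      · by_cases hve : v = x
        · have hu : u = p0 := huniq u (hve ▸ huv.symm)
          rw [hve, hu, hcx, hcp0, Nat.dist_comm]
          exact ⟨hdcp, hdX⟩
        · rw [hcs u hue, hcs v hve]
          exact hc'.2.2.1 ⟨u, hue⟩ ⟨v, hve⟩ huv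
    · intro u v w huv hvw hneuw
      by_cases hve : v = x
      · exact absurd ((huniq u (hve ▸ huv.symm)).trans (huniq w (hve ▸ hvw)).symm) hneuw
      · by_cases hue : u = x
        · have hv : v = p0 := huniq v (hue ▸ huv)
          have hwe : w ≠ x := fun h => hneuw (hue.trans h.symm)
          rw [hue, hv, hcx, hcp0, hcs w hwe]
          intro habs
          apply hdS
          rw [habs, Nat.dist_comm]
          refine Finset.mem_image.mpr ⟨⟨w, hwe⟩, (mem_neighborFinset _ _ _).mpr ?_, rfl⟩
          exact (show G.Adj p0 w from hv ▸ hvw)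
        · by_cases hwe : w = x
          · have hv : v = p0 := huniq v (hwe ▸ hvw.symm)
            rw [hwe, hv, hcx, hcp0, hcs u hue]
            intro habs
            apply hdS
            rw [Nat.dist_comm, ← habs]
            refine Finset.mem_image.mpr ⟨⟨u, hue⟩, (mem_neighborFinset _ _ _).mpr ?_, rfl⟩
            exact (show G.Adj p0 u from hv ▸ huv.symm)
          · rw [hcs u hue, hcs v hve, hcs w hwe]
            exact hc'.2.2.2 ⟨u, hue⟩ ⟨v, hve⟩ ⟨w, hwe⟩ huv hvw
              (fun h => hneuw (congrArg Subtype.val h))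

/-- For every finite tree `T` with maximum degree `Δ`, `Δ + 1 ≤ χ_td(T) ≤ 2Δ + 1`. -/
theorem tdChromatic_tree {V : Type*} [Fintype V] (G : SimpleGraph V)
    [DecidableRel G.Adj] (htree : G.IsTree) :
    G.maxDegree + 1 ≤ tdChromatic G ∧ tdChromatic G ≤ 2 * G.maxDegree + 1 := by
  classical
  obtain ⟨c0, hc0⟩ := build_labeling (Fintype.card V) V G rfl htree
  have hmem : (2 * G.maxDegree + 1) ∈ {k | ∃ c : V → ℕ, IsTotalDiffLabeling G k c} := ⟨c0, hc0⟩
  refine ⟨?_, Nat.sInf_le hmem⟩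
  apply le_csInf ⟨_, hmem⟩
  rintro k ⟨c, hk1, hk2, hk3, hk4⟩
  haveI : Nonempty V := htree.isConnected.nonempty
  obtain ⟨v, hv⟩ := G.exists_maximal_degree_vertex
  have hdeg : G.degree v ≤ k - 1 := by
    have hmaps : ∀ u ∈ G.neighborFinset v, Nat.dist (c u) (c v) ∈ Finset.Icc 1 (k-1) := by
      intro u hu
      have hadj : G.Adj v u := (mem_neighborFinset _ _ _).mp hu
      have h1 := hk1 u
      have h2 := hk1 v
      have hne := hk2 v u hadj
      have hd : Nat.dist (c u) (c v) = c u - c v + (c v - c u) := rfl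
      rw [Finset.mem_Icc]
      omega
    have hinj : Set.InjOn (fun u => Nat.dist (c u) (c v)) (G.neighborFinset v) := by
      intro a ha b hb hab
      by_contra hne
      exact hk4 a v b ((mem_neighborFinset _ _ _).mp ha).symm ((mem_neighborFinset _ _ _).mp hb)
        hne (hab.trans (Nat.dist_comm _ _))
    have := Finset.card_le_card_of_injOn _ hmaps hinj
    rw [Nat.card_Icc] at this
    have hk : 1 ≤ k := le_trans (hk1 v).1 (hk1 v).2
    have hdd : G.degree v = (G.neighborFinset v).card := rfl
    omega
  have hk : 1 ≤ k := le_trans (hk1 v).1 (hk1 v).2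
  omega
end
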